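/- (Closed form of the OU covariance integral.) Let A and Σ be real p×p matrices with A invertible, Σ symmetric, and A⁻¹Σ symmetric. Then for every t ≥ 0, Γ_t := ∫₀ᵗ exp(−sA)·Σ·exp(−sAᵀ) ds = (1/2)·A⁻¹·(I − exp(−2tA))·Σ. -/

import Mathlib

open Matrix MeasureTheory

section Aux

variable {p : ℕ}

private lemma entry_hasDerivAt (A : Matrix (Fin p) (Fin p) ℝ) (s : ℝ) (i j : Fin p) :
    HasDerivAt (fun u : ℝ => NormedSpace.exp (u • A) i j)
      ((A * NormedSpace.exp (s • A)) i j) s := by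
  letI : NormedRing (Matrix (Fin p) (Fin p) ℝ) := Matrix.linftyOpNormedRing
  letI : NormedAlgebra ℝ (Matrix (Fin p) (Fin p) ℝ) := Matrix.linftyOpNormedAlgebra
  letI : CompleteSpace (Matrix (Fin p) (Fin p) ℝ) := FiniteDimensional.complete ℝ _
  have h := hasDerivAt_exp_smul_const' (𝕂 := ℝ) A s
  let L : Matrix (Fin p) (Fin p) ℝ →ₗ[ℝ] ℝ :=
    (LinearMap.proj j).comp (LinearMap.proj (R := ℝ) (φ := fun _ : Fin p => Fin p → ℝ) i)
  exact ((LinearMap.toContinuousLinearMap L).hasFDerivAt.comp_hasDerivAt s h)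

private lemma exp_mul_comm (M N S : Matrix (Fin p) (Fin p) ℝ)
    (h : ∀ n : ℕ, M ^ n * S = S * N ^ n) :
    NormedSpace.exp M * S = S * NormedSpace.exp N := by
  letI : NormedRing (Matrix (Fin p) (Fin p) ℝ) := Matrix.linftyOpNormedRing
  letI : NormedAlgebra ℝ (Matrix (Fin p) (Fin p) ℝ) := Matrix.linftyOpNormedAlgebra
  letI : CompleteSpace (Matrix (Fin p) (Fin p) ℝ) := FiniteDimensional.complete ℝ _
  have hM := NormedSpace.expSeries_summable' (𝕂 := ℝ) M
  have hN := NormedSpace.expSeries_summable' (𝕂 := ℝ) N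
  let L1 := LinearMap.toContinuousLinearMap
    (LinearMap.mulRight ℝ (A := Matrix (Fin p) (Fin p) ℝ) S)
  let L2 := LinearMap.toContinuousLinearMap
    (LinearMap.mulLeft ℝ (A := Matrix (Fin p) (Fin p) ℝ) S)
  rw [NormedSpace.exp_eq_tsum ℝ]
  show (∑' n : ℕ, ((n.factorial : ℝ))⁻¹ • M ^ n) * S
      = S * ∑' n : ℕ, ((n.factorial : ℝ))⁻¹ • N ^ n
  calc (∑' n : ℕ, ((n.factorial : ℝ))⁻¹ • M ^ n) * S
      = L1 (∑' n : ℕ, ((n.factorial : ℝ))⁻¹ • M ^ n) := rfl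
    _ = ∑' n : ℕ, L1 (((n.factorial : ℝ))⁻¹ • M ^ n) := ContinuousLinearMap.map_tsum _ hM
    _ = ∑' n : ℕ, L2 (((n.factorial : ℝ))⁻¹ • N ^ n) := by
        refine tsum_congr fun n => ?_
        show ((n.factorial : ℝ))⁻¹ • M ^ n * S = S * ((n.factorial : ℝ))⁻¹ • N ^ n
        rw [smul_mul_assoc, mul_smul_comm, h n]
    _ = L2 (∑' n : ℕ, ((n.factorial : ℝ))⁻¹ • N ^ n) := (ContinuousLinearMap.map_tsum _ hN).symm
    _ = S * ∑' n : ℕ, ((n.factorial : ℝ))⁻¹ • N ^ n := rfl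

end Aux

attribute [local instance] Matrix.normedAddCommGroup Matrix.normedSpace

section Aux2

variable {p : ℕ}

private lemma matrix_hasDerivAt_exp (A : Matrix (Fin p) (Fin p) ℝ) (s : ℝ) :
    HasDerivAt (fun u : ℝ => NormedSpace.exp (u • A))
      (A * NormedSpace.exp (s • A)) s := by
  apply hasDerivAt_pi.2
  intro i
  apply hasDerivAt_pi.2
  intro j
  exact entry_hasDerivAt A s i j

end Aux2

/-- Closed form of the OU covariance integral: if `A` is invertible, `Σ` is
symmetric, and `A⁻¹Σ` is symmetric, then for every `t ≥ 0`,
`∫₀ᵗ exp(−sA)·Σ·exp(−sAᵀ) ds = (1/2)·A⁻¹·(I − exp(−2tA))·Σ`. -/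
theorem ou_covariance_integral {p : ℕ} (A S : Matrix (Fin p) (Fin p) ℝ)
    (hA : IsUnit A) (hS : Sᵀ = S) (hAS : (A⁻¹ * S)ᵀ = A⁻¹ * S)
    (t : ℝ) (ht : 0 ≤ t) :
    (∫ s in (0 : ℝ)..t,
        NormedSpace.exp ((-s) • A) * S * NormedSpace.exp ((-s) • Aᵀ)) =
      (1 / 2 : ℝ) • (A⁻¹ * (1 - NormedSpace.exp ((-(2 * t)) • A)) * S) := by
  have hdet : IsUnit A.det := (Matrix.isUnit_iff_isUnit_det A).mp hA
  have hdetT : IsUnit Aᵀ.det := by rwa [Matrix.det_transpose]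
  -- key commutation: A * S = S * Aᵀ
  have hcomm : A * S = S * Aᵀ := by
    have h1 : A⁻¹ * S = S * (Aᵀ)⁻¹ := by
      conv_lhs => rw [← hAS]
      rw [Matrix.transpose_mul, hS, Matrix.transpose_nonsing_inv]
    have h2 : A * (S * (Aᵀ)⁻¹) = S := by
      rw [← h1]; exact Matrix.mul_nonsing_inv_cancel_left _ _ hdet
    calc A * S = A * (S * ((Aᵀ)⁻¹ * Aᵀ)) := by
          rw [Matrix.nonsing_inv_mul _ hdetT, Matrix.mul_one]
      _ = A * (S * (Aᵀ)⁻¹) * Aᵀ := by rw [← Matrix.mul_assoc S, ← Matrix.mul_assoc]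
      _ = S * Aᵀ := by rw [h2]
  have hc : ∀ c : ℝ, (c • A) * S = S * (c • Aᵀ) := fun c => by
    rw [smul_mul_assoc, hcomm, mul_smul_comm]
  have hpow : ∀ (c : ℝ) (n : ℕ), (c • A) ^ n * S = S * (c • Aᵀ) ^ n := by
    intro c n
    induction n with
    | zero => simp
    | succ n ih =>
        calc (c • A) ^ (n + 1) * S = (c • A) ^ n * ((c • A) * S) := by
              rw [pow_succ, Matrix.mul_assoc]
          _ = (c • A) ^ n * S * (c • Aᵀ) := by rw [hc, Matrix.mul_assoc]
          _ = S * (c • Aᵀ) ^ n * (c • Aᵀ) := by rw [ih]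
          _ = S * (c • Aᵀ) ^ (n + 1) := by rw [Matrix.mul_assoc, ← pow_succ]
  -- rewrite the integrand
  have hfun : ∀ s : ℝ, NormedSpace.exp ((-s) • A) * S * NormedSpace.exp ((-s) • Aᵀ)
      = NormedSpace.exp ((-2 * s) • A) * S := by
    intro s
    have h2 : NormedSpace.exp ((-s) • A) * S = S * NormedSpace.exp ((-s) • Aᵀ) :=
      exp_mul_comm _ _ _ (hpow (-s))
    have hadd : (-s) • A + (-s) • A = (-2 * s) • A := by
      rw [← add_smul]; congr 1; ring
    have h3 : NormedSpace.exp ((-s) • A) * NormedSpace.exp ((-s) • A)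
        = NormedSpace.exp ((-2 * s) • A) := by
      rw [← Matrix.exp_add_of_commute _ _ (Commute.refl _), hadd]
    calc NormedSpace.exp ((-s) • A) * S * NormedSpace.exp ((-s) • Aᵀ)
        = NormedSpace.exp ((-s) • A) * (S * NormedSpace.exp ((-s) • Aᵀ)) :=
          Matrix.mul_assoc _ _ _
      _ = NormedSpace.exp ((-s) • A) * (NormedSpace.exp ((-s) • A) * S) := by rw [← h2]
      _ = NormedSpace.exp ((-2 * s) • A) * S := by rw [← Matrix.mul_assoc, h3]
  -- derivative of the exponential with inner linear map
  have hexp : ∀ s : ℝ, HasDerivAt (fun u : ℝ => NormedSpace.exp ((-2 * u) • A))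
      ((-2 : ℝ) • (A * NormedSpace.exp ((-2 * s) • A))) s := by
    intro s
    have hlin : HasDerivAt (fun u : ℝ => -2 * u) (-2 : ℝ) s := by
      simpa using (hasDerivAt_id s).const_mul (-2 : ℝ)
    exact (matrix_hasDerivAt_exp A (-2 * s)).scomp s hlin
  -- the antiderivative
  set F : ℝ → Matrix (Fin p) (Fin p) ℝ := fun u =>
    (1 / 2 : ℝ) • (A⁻¹ * S) - (1 / 2 : ℝ) • (A⁻¹ * NormedSpace.exp ((-2 * u) • A) * S)
    with hF
  let L : Matrix (Fin p) (Fin p) ℝ →ₗ[ℝ] Matrix (Fin p) (Fin p) ℝ :=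
    { toFun := fun M => (1 / 2 : ℝ) • (A⁻¹ * M * S)
      map_add' := fun M N => by
        show (1 / 2 : ℝ) • (A⁻¹ * (M + N) * S) = _
        rw [Matrix.mul_add, Matrix.add_mul, smul_add]
      map_smul' := fun c M => by
        show (1 / 2 : ℝ) • (A⁻¹ * (c • M) * S) = c • ((1 / 2 : ℝ) • (A⁻¹ * M * S))
        rw [mul_smul_comm, smul_mul_assoc, smul_smul, smul_smul, mul_comm] }
  have hFd : ∀ s : ℝ, HasDerivAt F (NormedSpace.exp ((-2 * s) • A) * S) s := by
    intro s
    have h1 := (((LinearMap.toContinuousLinearMap L).hasFDerivAt.comp_hasDerivAt s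
      (hexp s)).const_sub ((1 / 2 : ℝ) • (A⁻¹ * S)))
    convert h1 using 1
    show NormedSpace.exp ((-2 * s) • A) * S
        = -((1 / 2 : ℝ) • (A⁻¹ * ((-2 : ℝ) • (A * NormedSpace.exp ((-2 * s) • A))) * S))
    rw [mul_smul_comm, smul_mul_assoc, smul_smul, ← Matrix.mul_assoc,
      Matrix.nonsing_inv_mul _ hdet, Matrix.one_mul]
    norm_num
    all_goals rfl
  -- continuity of the integrand
  have hcont : Continuous fun s : ℝ => NormedSpace.exp ((-2 * s) • A) * S := by
    have h1 : Continuous fun s : ℝ => NormedSpace.exp ((-2 * s) • A) :=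
      continuous_iff_continuousAt.2 fun s => (hexp s).continuousAt
    exact h1.matrix_mul continuous_const
  have hint : (∫ s in (0 : ℝ)..t, NormedSpace.exp ((-2 * s) • A) * S) = F t - F 0 :=
    intervalIntegral.integral_eq_sub_of_hasDerivAt (fun s _ => hFd s)
      (hcont.intervalIntegrable 0 t)
  rw [intervalIntegral.integral_congr (g := fun s => NormedSpace.exp ((-2 * s) • A) * S)
    (fun s _ => hfun s), hint]
  simp only [hF]
  have h0 : ((-2 : ℝ) * 0) • A = (0 : ℝ) • A := by norm_num
  have hT : ((-2 : ℝ) * t) • A = (-(2 * t)) • A := by congr 1; ring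
  rw [h0, hT, zero_smul, NormedSpace.exp_zero, Matrix.mul_one]
  rw [Matrix.mul_sub, Matrix.sub_mul, Matrix.mul_one, smul_sub]
  abel
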